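/- A quasi-isomorphism between two cochain complexes of abelian groups, each with cohomology concentrated in degrees −1 and 0, induces an equivalence of the associated groupoids (the groupoid with objects ker(d⁰) and morphisms x → x' given by classes y ∈ C⁻¹/im(d⁻²) with dy = x − x'). -/

import Mathlib

open CategoryTheory

section

variable {Cm2 Cm1 C0 C1 : Type*}
  [AddCommGroup Cm2] [AddCommGroup Cm1] [AddCommGroup C0] [AddCommGroup C1]
variable {Dm2 Dm1 D0 D1 : Type*}
  [AddCommGroup Dm2] [AddCommGroup Dm1] [AddCommGroup D0] [AddCommGroup D1]

/-- The differential `d⁻¹` descends to the quotient `C⁻¹ / im(d⁻²)`. -/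
def dBar (d2 : Cm2 →+ Cm1) (d1 : Cm1 →+ C0) (h21 : ∀ a, d1 (d2 a) = 0) :
    Cm1 ⧸ d2.range →+ C0 :=
  QuotientAddGroup.lift d2.range d1 (by rintro _ ⟨a, rfl⟩; exact h21 a)

/-- The groupoid associated to a complex `C⁻² → C⁻¹ → C⁰ → C¹` of abelian groups:
objects are elements of `ker d⁰`, morphisms `x ⟶ x'` are classes
`y ∈ C⁻¹/d⁻²(C⁻²)` with `d⁻¹(y) = x − x'`; composition is addition. -/
def complexGroupoid (d2 : Cm2 →+ Cm1) (d1 : Cm1 →+ C0) (d0 : C0 →+ C1)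
    (h21 : ∀ a, d1 (d2 a) = 0) : Groupoid {x : C0 // d0 x = 0} where
  Hom x x' := {y : Cm1 ⧸ d2.range // dBar d2 d1 h21 y = x.1 - x'.1}
  id x := ⟨0, by simp⟩
  comp {x x' x''} u v := ⟨u.1 + v.1, by rw [map_add, u.2, v.2]; abel⟩
  inv {x x'} u := ⟨-u.1, by rw [map_neg, u.2]; abel⟩
  id_comp u := Subtype.ext (zero_add _)
  comp_id u := Subtype.ext (add_zero _)
  assoc u v w := Subtype.ext (add_assoc _ _ _)
  inv_comp u := Subtype.ext (neg_add_cancel _)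
  comp_inv u := Subtype.ext (add_neg_cancel _)

/-- The functor between the associated groupoids induced by a map of complexes. -/
def inducedFunctor (d2 : Cm2 →+ Cm1) (d1 : Cm1 →+ C0) (d0 : C0 →+ C1)
    (h21 : ∀ a, d1 (d2 a) = 0)
    (e2 : Dm2 →+ Dm1) (e1 : Dm1 →+ D0) (e0 : D0 →+ D1)
    (k21 : ∀ a, e1 (e2 a) = 0)
    (fm2 : Cm2 →+ Dm2) (fm1 : Cm1 →+ Dm1) (f0 : C0 →+ D0) (f1 : C1 →+ D1)
    (sq2 : ∀ a, fm1 (d2 a) = e2 (fm2 a))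
    (sq1 : ∀ y, f0 (d1 y) = e1 (fm1 y))
    (sq0 : ∀ x, f1 (d0 x) = e0 (f0 x)) :
    letI := complexGroupoid d2 d1 d0 h21
    letI := complexGroupoid e2 e1 e0 k21
    {x : C0 // d0 x = 0} ⥤ {x : D0 // e0 x = 0} :=
  letI := complexGroupoid d2 d1 d0 h21
  letI := complexGroupoid e2 e1 e0 k21
  have hle : d2.range ≤ e2.range.comap fm1 := by
    rintro _ ⟨a, rfl⟩; exact ⟨fm2 a, (sq2 a).symm⟩
  have key : ∀ y : Cm1 ⧸ d2.range,
      dBar e2 e1 k21 (QuotientAddGroup.map d2.range e2.range fm1 hle y) =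
        f0 (dBar d2 d1 h21 y) := by
    intro y
    refine QuotientAddGroup.induction_on y ?_
    intro z
    simp [dBar, QuotientAddGroup.map_mk, sq1]
  { obj := fun x => ⟨f0 x.1, by rw [← sq0, x.2, map_zero]⟩
    map := fun {x x'} u =>
      ⟨QuotientAddGroup.map d2.range e2.range fm1 hle u.1, by
        rw [key, u.2, map_sub]⟩
    map_id := fun x => Subtype.ext (map_zero _)
    map_comp := fun u v => Subtype.ext (map_add _ _ _) }

/-- **A quasi-isomorphism induces an equivalence of associated groupoids.**
If a map of complexes (each with cohomology concentrated in degrees `−1, 0`)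
induces isomorphisms on `H⁻¹` and on `H⁰` (stated elementwise below), then the
induced functor between the associated groupoids is an equivalence. -/
theorem stmt8 (d2 : Cm2 →+ Cm1) (d1 : Cm1 →+ C0) (d0 : C0 →+ C1)
    (h21 : ∀ a, d1 (d2 a) = 0) (h10 : ∀ y, d0 (d1 y) = 0)
    (e2 : Dm2 →+ Dm1) (e1 : Dm1 →+ D0) (e0 : D0 →+ D1)
    (k21 : ∀ a, e1 (e2 a) = 0) (k10 : ∀ y, e0 (e1 y) = 0)
    (fm2 : Cm2 →+ Dm2) (fm1 : Cm1 →+ Dm1) (f0 : C0 →+ D0) (f1 : C1 →+ D1)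
    (sq2 : ∀ a, fm1 (d2 a) = e2 (fm2 a))
    (sq1 : ∀ y, f0 (d1 y) = e1 (fm1 y))
    (sq0 : ∀ x, f1 (d0 x) = e0 (f0 x))
    -- the map is a quasi-isomorphism: it induces a bijection on `H⁰` …
    (hH0surj : ∀ x' : D0, e0 x' = 0 → ∃ x : C0, d0 x = 0 ∧ ∃ y', f0 x - x' = e1 y')
    (hH0inj : ∀ x : C0, d0 x = 0 → (∃ y', f0 x = e1 y') → ∃ y, x = d1 y)
    -- … and on `H⁻¹`
    (hH1surj : ∀ y' : Dm1, e1 y' = 0 → ∃ y : Cm1, d1 y = 0 ∧ ∃ z', fm1 y - y' = e2 z')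
    (hH1inj : ∀ y : Cm1, d1 y = 0 → (∃ z', fm1 y = e2 z') → ∃ z, y = d2 z) :
    letI := complexGroupoid d2 d1 d0 h21
    letI := complexGroupoid e2 e1 e0 k21
    (inducedFunctor d2 d1 d0 h21 e2 e1 e0 k21 fm2 fm1 f0 f1
      sq2 sq1 sq0).IsEquivalence := by
  letI := complexGroupoid d2 d1 d0 h21
  letI := complexGroupoid e2 e1 e0 k21
  set F := inducedFunctor d2 d1 d0 h21 e2 e1 e0 k21 fm2 fm1 f0 f1 sq2 sq1 sq0
    with hF
  have hmap : ∀ {x x' : {x : C0 // d0 x = 0}} (u : x ⟶ x'),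
      (F.map u).1 = QuotientAddGroup.map d2.range e2.range fm1
        (by rintro _ ⟨a, rfl⟩; exact ⟨fm2 a, (sq2 a).symm⟩) u.1 := fun u => rfl
  have hfaith : F.Faithful := by
    constructor
    intro x x' u v h
    apply Subtype.ext
    have h1 : QuotientAddGroup.map d2.range e2.range fm1
        (by rintro _ ⟨a, rfl⟩; exact ⟨fm2 a, (sq2 a).symm⟩) (u.1 - v.1) = 0 := by
      rw [map_sub]
      rw [← hmap u, ← hmap v, h, sub_self]
    have h2 : dBar d2 d1 h21 (u.1 - v.1) = 0 := by
      rw [map_sub, u.2, v.2, sub_self]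
    obtain ⟨s, hs⟩ := QuotientAddGroup.mk'_surjective d2.range (u.1 - v.1)
    have hds : d1 s = 0 := by rw [← h2, ← hs]; rfl
    have hfs : fm1 s ∈ e2.range := by
      rw [← QuotientAddGroup.eq_zero_iff]
      rw [← hs] at h1
      exact h1
    obtain ⟨z, hz⟩ := hH1inj s hds (by obtain ⟨z', hz'⟩ := hfs; exact ⟨z', hz'.symm⟩)
    have : u.1 - v.1 = 0 := by
      rw [← hs, hz, QuotientAddGroup.mk'_apply, QuotientAddGroup.eq_zero_iff]
      exact ⟨z, rfl⟩
    exact sub_eq_zero.mp this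
  have hfull : F.Full := by
    constructor
    intro x x' u'
    obtain ⟨y', hy'⟩ := QuotientAddGroup.mk'_surjective e2.range u'.1
    have hey' : e1 y' = f0 x.1 - f0 x'.1 := by
      have := u'.2
      rw [← hy'] at this
      exact this
    have hd0 : d0 (x.1 - x'.1) = 0 := by rw [map_sub, x.2, x'.2, sub_self]
    obtain ⟨y0, hy0⟩ := hH0inj (x.1 - x'.1) hd0
      ⟨y', by rw [map_sub, ← hey']⟩
    have he : e1 (fm1 y0 - y') = 0 := by
      rw [map_sub, ← sq1, ← hy0, map_sub, hey', sub_self]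
    obtain ⟨w, hdw, z', hz'⟩ := hH1surj (fm1 y0 - y') he
    refine ⟨⟨QuotientAddGroup.mk' d2.range (y0 - w), ?_⟩, ?_⟩
    · show d1 (y0 - w) = x.1 - x'.1
      rw [map_sub, hdw, sub_zero, ← hy0]
    · apply Subtype.ext
      show QuotientAddGroup.mk' e2.range (fm1 (y0 - w)) = u'.1
      rw [← hy']
      show QuotientAddGroup.mk' e2.range (fm1 (y0 - w)) = QuotientAddGroup.mk' e2.range y'
      rw [QuotientAddGroup.mk'_eq_mk']
      refine ⟨e2 z', ⟨z', rfl⟩, ?_⟩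
      rw [map_sub]
      rw [sub_eq_iff_eq_add] at hz'
      rw [hz']
      abel
  have hess : F.EssSurj := by
    constructor
    intro x'
    obtain ⟨x, hdx, y', hy'⟩ := hH0surj x'.1 x'.2
    refine ⟨⟨x, hdx⟩, ⟨(Groupoid.isoEquivHom _ _).symm
      ⟨QuotientAddGroup.mk' e2.range y', ?_⟩⟩⟩
    show e1 y' = f0 x - x'.1
    rw [← hy']
  exact { faithful := hfaith, full := hfull, essSurj := hess }


end
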